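/- Let n be a positive integer. Define g : ℝⁿ → ℝ by g(x) = ∑ i, (log(1 + |x i|) - |x i| / (2 + 2|x i|)). Then (a) g(x) ≥ 0 = g(0) for every x ∈ ℝⁿ, and (b) if g is Fréchet differentiable at a point x with fderiv ℝ g x = 0, then x = 0. In particular every stationary point of g is a global minimizer, i.e., g is invex. -/

import Mathlib

open Real

noncomputable def hfun : ℝ → ℝ := fun t => Real.log (1 + |t|) - |t| / (2 + 2 * |t|)

lemma hfun_nonneg (t : ℝ) : 0 ≤ hfun t := by
  have hs : (0:ℝ) ≤ |t| := abs_nonneg t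
  set s := |t| with hsdef
  have hpos : (0:ℝ) < 1 + s := by linarith
  have h1 : Real.log ((1+s)⁻¹) ≤ (1+s)⁻¹ - 1 := Real.log_le_sub_one_of_pos (by positivity)
  rw [Real.log_inv] at h1
  have h2 : 1 - (1+s)⁻¹ ≤ Real.log (1+s) := by linarith
  have h3 : 1 - (1+s)⁻¹ = s / (1+s) := by field_simp; ring
  have h4 : s / (2 + 2*s) ≤ s / (1+s) :=
    div_le_div_of_nonneg_left hs hpos (by linarith)
  unfold hfun
  rw [← hsdef]
  linarith [h3 ▸ h2]

lemma hfun_deriv_pos (t : ℝ) (ht : 0 < t) :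
    HasDerivAt hfun ((1 + 2*t) / (2*(1+t)^2)) t := by
  have hl : HasDerivAt (fun s : ℝ => Real.log (1+s)) (1/(1+t)) t := by
    have h0 : HasDerivAt (fun s : ℝ => 1+s) 1 t := (hasDerivAt_id t).const_add 1
    simpa using h0.log (by positivity)
  have hd : HasDerivAt (fun s : ℝ => s / (2+2*s))
      ((1*(2+2*t) - t*(2*1))/(2+2*t)^2) t := by
    have : HasDerivAt (fun s : ℝ => 2+2*s) (2*1) t := ((hasDerivAt_id t).const_mul 2).const_add 2
    exact (hasDerivAt_id t).div this (by positivity)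
  have h1 : HasDerivAt (fun s : ℝ => Real.log (1+s) - s/(2+2*s)) ((1 + 2*t) / (2*(1+t)^2)) t := by
    refine (hl.sub hd).congr_deriv ?_
    have : (1+t) ≠ 0 := by positivity
    have : (2+2*t) ≠ 0 := by positivity
    field_simp
    ring
  apply h1.congr_of_eventuallyEq
  filter_upwards [Ioi_mem_nhds ht] with s hs
  simp only [hfun, abs_of_pos (Set.mem_Ioi.mp hs)]

lemma hfun_deriv_neg (t : ℝ) (ht : t < 0) :
    HasDerivAt hfun (-((1 + 2*(-t)) / (2*(1+(-t))^2))) t := by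
  have h0 := (hfun_deriv_pos (-t) (by linarith)).comp t (hasDerivAt_neg t)
  have he : (hfun ∘ fun s => -s) = hfun := by
    funext s; simp [hfun, abs_neg]
  rw [he] at h0
  exact h0.congr_deriv (by ring)

theorem stmt_4 (n : ℕ) (hn : 0 < n)
    (g : EuclideanSpace ℝ (Fin n) → ℝ)
    (hg : ∀ x, g x = ∑ i, (Real.log (1 + |x i|) - |x i| / (2 + 2 * |x i|))) :
    (g 0 = 0) ∧ (∀ x, 0 ≤ g x) ∧
    (∀ x, DifferentiableAt ℝ g x → fderiv ℝ g x = 0 → x = 0) := by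
  have hg' : ∀ x, g x = ∑ i, hfun (x i) := by
    intro x; rw [hg]; rfl
  refine ⟨?_, ?_, ?_⟩
  · rw [hg']
    simp [hfun]
  · intro x
    rw [hg']
    exact Finset.sum_nonneg fun i _ => hfun_nonneg _
  · intro x hdiff hfd
    by_contra hx
    obtain ⟨i, hi⟩ : ∃ i, x i ≠ 0 := by
      by_contra hall
      push_neg at hall
      exact hx (by ext j; exact hall j)
    set v : EuclideanSpace ℝ (Fin n) := EuclideanSpace.single i 1 with hv
    -- curve t ↦ x + t • v
    have hφ : HasDerivAt (fun t : ℝ => x + t • v) v 0 := by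
      have h1 : HasDerivAt (fun t : ℝ => t • v) ((1:ℝ) • v) 0 := (hasDerivAt_id 0).smul_const v
      simpa using h1.const_add x
    have hcomp : HasDerivAt (fun t : ℝ => g (x + t • v)) 0 0 := by
      have h2 : HasFDerivAt g (fderiv ℝ g x) (x + (0:ℝ) • v) := by
        simpa using hdiff.hasFDerivAt
      have := h2.comp_hasDerivAt 0 hφ
      rw [hfd] at this
      simp only [ContinuousLinearMap.zero_apply] at this
      exact this
    -- explicit form of the curve
    have hF : ∀ t : ℝ, g (x + t • v) = hfun (x i + t) + ∑ j ∈ Finset.univ.erase i, hfun (x j) := by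
      intro t
      rw [hg']
      rw [← Finset.add_sum_erase _ _ (Finset.mem_univ i)]
      congr 1
      · congr 1
        simp [hv, PiLp.add_apply, PiLp.smul_apply, EuclideanSpace.single_apply]
      · apply Finset.sum_congr rfl
        intro j hj
        have hne : j ≠ i := Finset.ne_of_mem_erase hj
        congr 1
        simp [hv, PiLp.add_apply, PiLp.smul_apply, EuclideanSpace.single_apply, hne]
    -- derivative of the explicit form
    rcases lt_or_gt_of_ne hi with hlt | hgt
    · have hd := hfun_deriv_neg (x i) hlt
      have hd2 : HasDerivAt (fun t : ℝ => hfun (x i + t) + ∑ j ∈ Finset.univ.erase i, hfun (x j))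
          (-((1 + 2*(-(x i))) / (2*(1+(-(x i)))^2)) * 1) 0 := by
        have hd' : HasDerivAt hfun (-((1 + 2*(-(x i))) / (2*(1+(-(x i)))^2))) (x i + 0) := by
          simpa using hd
        have h4 := hd'.comp (0:ℝ) ((hasDerivAt_id (0:ℝ)).const_add (x i))
        exact h4.add_const _
      rw [show (fun t : ℝ => g (x + t • v)) = _ from funext hF] at hcomp
      have heq := hd2.unique hcomp
      rw [mul_one] at heq
      have hnum : (0:ℝ) < 1 + 2*(-(x i)) := by linarith
      have hden : (0:ℝ) < 2*(1+(-(x i)))^2 := by nlinarith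
      have := div_pos hnum hden
      linarith
    · have hd := hfun_deriv_pos (x i) hgt
      have hd2 : HasDerivAt (fun t : ℝ => hfun (x i + t) + ∑ j ∈ Finset.univ.erase i, hfun (x j))
          ((1 + 2*(x i)) / (2*(1+(x i))^2) * 1) 0 := by
        have hd' : HasDerivAt hfun ((1 + 2*(x i)) / (2*(1+(x i))^2)) (x i + 0) := by
          simpa using hd
        have h4 := hd'.comp (0:ℝ) ((hasDerivAt_id (0:ℝ)).const_add (x i))
        exact h4.add_const _
      rw [show (fun t : ℝ => g (x + t • v)) = _ from funext hF] at hcomp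
      have heq := hd2.unique hcomp
      rw [mul_one] at heq
      have hnum : (0:ℝ) < 1 + 2*(x i) := by linarith
      have hden : (0:ℝ) < 2*(1+(x i))^2 := by positivity
      have := div_pos hnum hden
      linarith
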